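/- In the dual-opinion scalar system with 2/(φ·(h-1)+2) < b < 1, if x(k) ≥ x̂(1,h,b) for some time k ≥ 0, then there exists T > k such that x(t) < x̂(1,h,b) for all t > T. -/

import Mathlib

open Filter Topology

/-- Aggregate explicit opinion received from the in-group side:
`A(y) = h·y + 1 - y`. -/
noncomputable def A (h y : ℝ) : ℝ := h * y + 1 - y

/-- Aggregate explicit opinion received from the out-group side:
`B(y) = y + h·(1 - y)`. -/
noncomputable def B (h y : ℝ) : ℝ := y + h * (1 - y)

/-- The function `g(x,b)` of the paper, for `b ∈ (0,1)`:
`g(x,b) = (x^{1-b} - (1-x)^{1-b}) / (x·(1-x)^{1-b} - (1-x)·x^{1-b})` for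
`x ∈ (1/2,1)` and `g(1/2,b) = 2/b - 2`. -/
noncomputable def g (x b : ℝ) : ℝ :=
  if x = 1 / 2 then 2 / b - 2
  else (x ^ (1 - b) - (1 - x) ^ (1 - b)) /
    (x * (1 - x) ^ (1 - b) - (1 - x) * x ^ (1 - b))

/- ### Auxiliary analytic lemmas -/

private lemma amgm_aux {c r : ℝ} (hc0 : 0 < c) (hc1 : c < 1) (hr : 0 < r) :
    2 * r ^ (2*c - 1) ≤ (c+1) * r ^ c + (1-c) * r ^ (c-2) := by
  have hw : (c+1)/2 + (1-c)/2 = 1 := by ring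
  have h := Real.geom_mean_le_arith_mean2_weighted (by linarith : (0:ℝ) ≤ (c+1)/2)
    (by linarith : (0:ℝ) ≤ (1-c)/2) (Real.rpow_nonneg hr.le c) (Real.rpow_nonneg hr.le (c-2)) hw
  have e1 : (r ^ c) ^ ((c+1)/2) * (r ^ (c-2)) ^ ((1-c)/2) = r ^ (2*c-1) := by
    rw [← Real.rpow_mul hr.le, ← Real.rpow_mul hr.le, ← Real.rpow_add hr]
    congr 1
    ring
  rw [e1] at h
  linarith

private lemma sfun_nonneg {c : ℝ} (hc0 : 0 < c) (hc1 : c < 1) {r : ℝ} (hr : 1 ≤ r) :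
    0 ≤ c * (r ^ (c+1) - r ^ (c-1)) + 1 - r ^ (2*c) := by
  set f : ℝ → ℝ := fun s => c * (s^(c+1) - s^(c-1)) + 1 - s^(2*c) with hf
  have hd : ∀ s : ℝ, 0 < s →
      HasDerivAt f (c * ((c+1)*s^c - (c-1)*s^(c-2)) - (2*c)*s^(2*c-1)) s := by
    intro s hs
    have h1 : HasDerivAt (fun s : ℝ => s^(c+1)) ((c+1)*s^c) s := by
      simpa [show c+1-1 = c by ring] using
        Real.hasDerivAt_rpow_const (x := s) (p := c+1) (Or.inl hs.ne')
    have h2 : HasDerivAt (fun s : ℝ => s^(c-1)) ((c-1)*s^(c-2)) s := by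
      simpa [show c-1-1 = c-2 by ring] using
        Real.hasDerivAt_rpow_const (x := s) (p := c-1) (Or.inl hs.ne')
    have h3 : HasDerivAt (fun s : ℝ => s^(2*c)) ((2*c)*s^(2*c-1)) s :=
      Real.hasDerivAt_rpow_const (x := s) (p := 2*c) (Or.inl hs.ne')
    exact (((h1.sub h2).const_mul c).add_const 1).sub h3
  have hnn : ∀ s : ℝ, 1 ≤ s → 0 ≤ c * ((c+1)*s^c - (c-1)*s^(c-2)) - (2*c)*s^(2*c-1) := by
    intro s hs
    have hs0 : (0:ℝ) < s := lt_of_lt_of_le one_pos hs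
    have key : 0 ≤ (c+1)*s^c + (1-c)*s^(c-2) - 2*s^(2*c-1) := by
      linarith [amgm_aux hc0 hc1 hs0]
    nlinarith [mul_nonneg hc0.le key]
  have hmono : MonotoneOn f (Set.Ici 1) := by
    apply monotoneOn_of_deriv_nonneg (convex_Ici 1)
    · intro s hs
      exact (hd s (lt_of_lt_of_le one_pos hs)).continuousAt.continuousWithinAt
    · intro s hs
      rw [interior_Ici] at hs
      exact (hd s (lt_trans one_pos hs)).differentiableAt.differentiableWithinAt
    · intro s hs
      rw [interior_Ici] at hs
      rw [(hd s (lt_trans one_pos hs)).deriv]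
      exact hnn s hs.le
  have h1 : f 1 = 0 := by simp [hf]
  have := hmono (Set.self_mem_Ici) (Set.mem_Ici.2 hr) hr
  rw [h1] at this
  exact this

private lemma den_pos {c r : ℝ} (hc1 : c < 1) (hr : 1 < r) : 0 < r - r ^ c := by
  have : r ^ c < r := by
    have := Real.rpow_lt_rpow_of_exponent_lt hr hc1
    rwa [Real.rpow_one] at this
  linarith

private lemma chi_mono {c : ℝ} (hc0 : 0 < c) (hc1 : c < 1) :
    MonotoneOn (fun r : ℝ => (1+r) * (r^c - 1) / (r - r^c)) (Set.Ioi 1) := by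
  have hder : ∀ r : ℝ, 1 < r →
      HasDerivAt (fun r : ℝ => (1+r) * (r^c - 1) / (r - r^c))
        (((1*(r^c-1) + (1+r)*(c*r^(c-1))) * (r - r^c) -
          (1+r)*(r^c-1) * (1 - c*r^(c-1))) / (r - r^c)^2) r := by
    intro r hr
    have hr0 : (0:ℝ) < r := lt_trans one_pos hr
    have h1 : HasDerivAt (fun r : ℝ => r^c) (c*r^(c-1)) r :=
      Real.hasDerivAt_rpow_const (Or.inl hr0.ne')
    have hN : HasDerivAt (fun r : ℝ => (1+r) * (r^c - 1))
        (1*(r^c-1) + (1+r)*(c*r^(c-1))) r :=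
      (((hasDerivAt_id r).const_add 1)).mul (h1.sub_const 1)
    have hD : HasDerivAt (fun r : ℝ => r - r^c) (1 - c*r^(c-1)) r :=
      (hasDerivAt_id r).sub h1
    exact hN.div hD (den_pos hc1 hr).ne'
  have hnum : ∀ r : ℝ, 1 < r →
      0 ≤ ((1*(r^c-1) + (1+r)*(c*r^(c-1))) * (r - r^c) -
          (1+r)*(r^c-1) * (1 - c*r^(c-1))) := by
    intro r hr
    have hr0 : (0:ℝ) < r := lt_trans one_pos hr
    have ha : r ^ (c - 1 + 1) = r ^ (c-1) * r := Real.rpow_add_one hr0.ne' (c-1)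
    rw [show c - 1 + 1 = c by ring] at ha
    have hb2 : r ^ (2*c) = r ^ c * r ^ c := by
      rw [show (2:ℝ)*c = c + c by ring, Real.rpow_add hr0]
    have hcp1 : r ^ (c+1) = r ^ c * r := Real.rpow_add_one hr0.ne' c
    have key := sfun_nonneg hc0 hc1 hr.le
    have heq : ((1*(r^c-1) + (1+r)*(c*r^(c-1))) * (r - r^c) -
          (1+r)*(r^c-1) * (1 - c*r^(c-1)))
        = c * (r ^ (c+1) - r ^ (c-1)) + 1 - r ^ (2*c) := by
      rw [hb2, hcp1, ha]; ring
    linarith [heq ▸ key]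
  apply monotoneOn_of_deriv_nonneg (convex_Ioi 1)
  · intro s hs
    exact (hder s hs).continuousAt.continuousWithinAt
  · intro s hs
    rw [interior_Ioi] at hs
    exact (hder s hs).differentiableAt.differentiableWithinAt
  · intro s hs
    rw [interior_Ioi] at hs
    rw [(hder s hs).deriv]
    exact div_nonneg (hnum s hs) (sq_nonneg _)

private lemma core_mono {c : ℝ} (hc0 : 0 < c) (hc1 : c < 1) {u v : ℝ}
    (hu : 1/2 < u) (huv : u ≤ v) (hv : v < 1) :
    (u^c - (1-u)^c) * (v*(1-v)^c - (1-v)*v^c) ≤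
      (v^c - (1-v)^c) * (u*(1-u)^c - (1-u)*u^c) := by
  have hu0 : (0:ℝ) < u := by linarith
  have hv0 : (0:ℝ) < v := by linarith
  have h1u : (0:ℝ) < 1 - u := by linarith
  have h1v : (0:ℝ) < 1 - v := by linarith
  set ru := u / (1-u) with hru
  set rv := v / (1-v) with hrv
  have hru1 : 1 < ru := by rw [hru, lt_div_iff₀ h1u]; linarith
  have hrurv : ru ≤ rv := by
    rw [hru, hrv, div_le_div_iff₀ h1u h1v]; nlinarith
  have hrv1 : 1 < rv := lt_of_lt_of_le hru1 hrurv
  have hchi := chi_mono hc0 hc1 (Set.mem_Ioi.2 hru1) (Set.mem_Ioi.2 hrv1) hrurv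
  have hX : (1+ru) * (ru^c - 1) * (rv - rv^c) ≤ (1+rv) * (rv^c - 1) * (ru - ru^c) := by
    rw [div_le_div_iff₀ (den_pos hc1 hru1) (den_pos hc1 hrv1)] at hchi
    linarith
  have hrus : ru ^ c = u^c / (1-u)^c := by rw [hru, Real.div_rpow hu0.le h1u.le]
  have hrvs : rv ^ c = v^c / (1-v)^c := by rw [hrv, Real.div_rpow hv0.le h1v.le]
  have hC : (0:ℝ) ≤ (1-u)^c * (1-v)^c * (1-u) * (1-v) := by positivity
  have hmul := mul_le_mul_of_nonneg_right hX hC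
  have hne1 : ((1:ℝ)-u)^c ≠ 0 := (Real.rpow_pos_of_pos h1u c).ne'
  have hne2 : ((1:ℝ)-v)^c ≠ 0 := (Real.rpow_pos_of_pos h1v c).ne'
  have e1 : (1+ru) * (ru^c - 1) * (rv - rv^c) * ((1-u)^c * (1-v)^c * (1-u) * (1-v))
      = (u^c - (1-u)^c) * (v*(1-v)^c - (1-v)*v^c) := by
    rw [hrus, hrvs, hru, hrv]
    field_simp
    ring
  have e2 : (1+rv) * (rv^c - 1) * (ru - ru^c) * ((1-u)^c * (1-v)^c * (1-u) * (1-v))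
      = (v^c - (1-v)^c) * (u*(1-u)^c - (1-u)*u^c) := by
    rw [hrus, hrvs, hru, hrv]
    field_simp
    ring
  rw [e1, e2] at hmul
  exact hmul

private lemma rpow_split {z : ℝ} (hz : 0 < z) (b : ℝ) : z^(1-b) * z^b = z := by
  rw [← Real.rpow_add hz, show 1-b+b = 1 by ring, Real.rpow_one]

private lemma de_pos2 {c x : ℝ} (hc0 : 0 < c) (hc1 : c < 1) (hx1 : 1/2 < x) (hx2 : x < 1) :
    0 < x*(1-x)^c - (1-x)*x^c := by
  have hx0 : (0:ℝ) < x := by linarith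
  have h1x : (0:ℝ) < 1-x := by linarith
  have h1 : (1-x)^(1-c) < x^(1-c) :=
    Real.rpow_lt_rpow h1x.le (by linarith) (by linarith)
  have e1 : x^(1-c) * x^c = x := rpow_split hx0 c
  have e2 : (1-x)^(1-c) * (1-x)^c = 1-x := rpow_split h1x c
  have hxc : (0:ℝ) < x^c := Real.rpow_pos_of_pos hx0 _
  have h1xc : (0:ℝ) < (1-x)^c := Real.rpow_pos_of_pos h1x _
  have key : 0 < (x^(1-c) - (1-x)^(1-c)) * (x^c * (1-x)^c) :=
    mul_pos (sub_pos.2 h1) (mul_pos hxc h1xc)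
  have e3 : (x^(1-c) - (1-x)^(1-c)) * (x^c * (1-x)^c) = x*(1-x)^c - (1-x)*x^c := by
    linear_combination ((1-x)^c) * e1 - (x^c) * e2
  linarith [e3 ▸ key]

private lemma key_ineq {h b xh : ℝ} (hh : 1 < h) (hb0 : 0 < b) (hb1 : b < 1)
    (hxh1 : 1/2 < xh) (hxh2 : xh < 1)
    (hnu : xh^(1-b) - (1-xh)^(1-b) = (h-1) * (xh*(1-xh)^(1-b) - (1-xh)*xh^(1-b)))
    {z : ℝ} (hz1 : xh ≤ z) (hz2 : z < 1) :
    (1-z)*(z^b * A h z) ≤ z*((1-z)^b * B h z) := by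
  have hc0 : (0:ℝ) < 1-b := by linarith
  have hc1 : (1:ℝ)-b < 1 := by linarith
  have hz0 : 1/2 < z := lt_of_lt_of_le hxh1 hz1
  have hdeh := de_pos2 hc0 hc1 hxh1 hxh2
  have hcore := core_mono hc0 hc1 hxh1 hz1 hz2
  have h2 : ((h-1) * (z*(1-z)^(1-b) - (1-z)*z^(1-b))) * (xh*(1-xh)^(1-b) - (1-xh)*xh^(1-b))
      ≤ (z^(1-b) - (1-z)^(1-b)) * (xh*(1-xh)^(1-b) - (1-xh)*xh^(1-b)) := by
    calc ((h-1) * (z*(1-z)^(1-b) - (1-z)*z^(1-b))) * (xh*(1-xh)^(1-b) - (1-xh)*xh^(1-b))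
        = (xh^(1-b) - (1-xh)^(1-b)) * (z*(1-z)^(1-b) - (1-z)*z^(1-b)) := by
          linear_combination (-(z*(1-z)^(1-b) - (1-z)*z^(1-b))) * hnu
      _ ≤ _ := hcore
  have h3 : (h-1) * (z*(1-z)^(1-b) - (1-z)*z^(1-b)) ≤ z^(1-b) - (1-z)^(1-b) :=
    le_of_mul_le_mul_right h2 hdeh
  have h4 : (1-z)^(1-b) * A h z ≤ z^(1-b) * B h z := by
    simp only [A, B]; nlinarith [h3]
  have hz0' : (0:ℝ) < z := by linarith
  have h1z : (0:ℝ) < 1-z := by linarith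
  have e1 : z^(1-b) * z^b = z := rpow_split hz0' b
  have e2 : (1-z)^(1-b) * (1-z)^b = 1-z := rpow_split h1z b
  have h5 := mul_le_mul_of_nonneg_left h4
    (mul_nonneg (Real.rpow_nonneg hz0'.le b) (Real.rpow_nonneg h1z.le b))
  calc (1-z)*(z^b * A h z) = z^b*(1-z)^b * ((1-z)^(1-b) * A h z) := by
        linear_combination (-(z^b * A h z)) * e2
    _ ≤ z^b*(1-z)^b * (z^(1-b) * B h z) := h5
    _ = z*((1-z)^b * B h z) := by
        linear_combination ((1-z)^b * B h z) * e1

private lemma tendsto_contraction {e v : ℕ → ℝ} {φ q : ℝ} (hφ : 0 ≤ φ) (hq0 : 0 ≤ q)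
    (hq1 : q < 1) (hrec : ∀ n, |e (n+1)| ≤ φ * v (n+1) + q * |e n|)
    (hv0 : ∀ n, 0 ≤ v n) (hv : Tendsto v atTop (𝓝 0)) :
    Tendsto e atTop (𝓝 0) := by
  rw [Metric.tendsto_atTop]
  intro ε hε
  set δ : ℝ := (1-q)*ε/(2*(φ+1)) with hδdef
  have hδ : 0 < δ := by
    apply div_pos (by nlinarith) (by nlinarith)
  obtain ⟨N, hN⟩ := (Metric.tendsto_atTop.1 hv) δ hδ
  have hNv : ∀ n, N ≤ n → v n < δ := by
    intro n hn
    have := hN n hn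
    rwa [Real.dist_eq, sub_zero, abs_of_nonneg (hv0 n)] at this
  have hq1' : (0:ℝ) < 1 - q := by linarith
  have hφδ : φ * δ / (1-q) ≤ ε/2 := by
    rw [hδdef, div_le_div_iff₀ (by linarith) (by norm_num)]
    have h1 : φ * ((1-q)*ε/(2*(φ+1))) * 2 = (1-q) * (φ/(φ+1)) * ε := by
      field_simp
    have h2 : φ/(φ+1) ≤ 1 := by
      rw [div_le_one (by linarith)]; linarith
    calc φ * ((1-q)*ε/(2*(φ+1))) * 2 = (1-q) * (φ/(φ+1)) * ε := h1
      _ ≤ (1-q) * 1 * ε := by nlinarith [mul_pos hq1' hε]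
      _ = ε * (1-q) := by ring
  have hbound : ∀ m, |e (N+m)| ≤ q^m * |e N| + φ * δ / (1-q) := by
    intro m
    induction m with
    | zero =>
      simp only [pow_zero, one_mul, Nat.add_zero]
      have : 0 ≤ φ * δ / (1-q) := by positivity
      linarith
    | succ m ih =>
      have h1 : v (N+m+1) < δ := hNv _ (by omega)
      calc |e (N+(m+1))| = |e ((N+m)+1)| := by ring_nf
        _ ≤ φ * v ((N+m)+1) + q * |e (N+m)| := hrec _
        _ ≤ φ * δ + q * (q^m * |e N| + φ * δ / (1-q)) := by
            have := mul_le_mul_of_nonneg_left ih hq0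
            have h2 := mul_le_mul_of_nonneg_left h1.le hφ
            have h3 : (N+m)+1 = N+m+1 := rfl
            nlinarith
        _ = q^(m+1) * |e N| + φ * δ / (1-q) := by
            field_simp
            ring
  obtain ⟨M, hM⟩ := (Metric.tendsto_atTop.1
    ((tendsto_pow_atTop_nhds_zero_of_lt_one hq0 hq1).mul_const (|e N|))) (ε/2) (by linarith)
  refine ⟨N + M, fun n hn => ?_⟩
  have h4 : n - N ≥ M := by omega
  have h5 := hM (n - N) h4
  rw [Real.dist_eq, zero_mul, sub_zero] at h5
  have h6 : q^(n-N) * |e N| < ε/2 := lt_of_abs_lt h5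
  have h7 := hbound (n - N)
  rw [show N + (n - N) = n by omega] at h7
  rw [Real.dist_eq, sub_zero]
  calc |e n| ≤ q^(n-N) * |e N| + φ * δ / (1-q) := h7
    _ < ε/2 + ε/2 := by linarith
    _ = ε := by ring

private lemma step_lem {h b xt yt : ℝ} (hh : 1 < h) (hb0 : 0 < b)
    (hx1 : 1/2 < xt) (hx2 : xt < 1) (hy1 : 1/2 ≤ yt) (hy2 : yt ≤ xt) :
    1/2 < xt^b * A h yt / (xt^b * A h yt + (1-xt)^b * B h yt) ∧
    xt^b * A h yt / (xt^b * A h yt + (1-xt)^b * B h yt) < 1 ∧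
    A h yt / (h+1) < xt^b * A h yt / (xt^b * A h yt + (1-xt)^b * B h yt) := by
  have hA : 0 < A h yt := by simp only [A]; nlinarith
  have hB : 0 < B h yt := by simp only [B]; nlinarith
  have hAB : B h yt ≤ A h yt := by simp only [A, B]; nlinarith
  have hsum : A h yt + B h yt = h + 1 := by simp only [A, B]; ring
  have hP : (1-xt)^b < xt^b := Real.rpow_lt_rpow (by linarith) (by linarith) hb0
  have hPpos : 0 < xt^b := Real.rpow_pos_of_pos (by linarith) b
  have hQpos : 0 < (1-xt)^b := Real.rpow_pos_of_pos (by linarith) b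
  have hN : 0 < xt^b * A h yt := mul_pos hPpos hA
  have hD : 0 < (1-xt)^b * B h yt := mul_pos hQpos hB
  have hden : 0 < xt^b * A h yt + (1-xt)^b * B h yt := by linarith
  have hDN : (1-xt)^b * B h yt < xt^b * A h yt := by
    nlinarith [mul_pos hA (sub_pos.2 hP), mul_nonneg hQpos.le (sub_nonneg.2 hAB)]
  refine ⟨?_, ?_, ?_⟩
  · rw [lt_div_iff₀ hden]; linarith
  · rw [div_lt_one hden]; linarith
  · rw [div_lt_div_iff₀ (by linarith) hden]
    nlinarith [mul_lt_mul_of_pos_left hP (mul_pos hA hB)]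

private lemma step_dec {h b xt yt : ℝ} (hh : 1 < h) (hb0 : 0 < b)
    (hmain : (1-xt)*(xt^b * A h xt) ≤ xt*((1-xt)^b * B h xt))
    (hx1 : 1/2 < xt) (hx2 : xt < 1) (hy1 : 1/2 ≤ yt) (hy2 : yt < xt) :
    xt^b * A h yt / (xt^b * A h yt + (1-xt)^b * B h yt) < xt := by
  have hA : 0 < A h yt := by simp only [A]; nlinarith
  have hB : 0 < B h yt := by simp only [B]; nlinarith
  have hA' : A h yt < A h xt := by simp only [A]; nlinarith
  have hB' : B h xt < B h yt := by simp only [B]; nlinarith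
  have hPpos : 0 < xt^b := Real.rpow_pos_of_pos (by linarith) b
  have hQpos : 0 < (1-xt)^b := Real.rpow_pos_of_pos (by linarith) b
  have hN : 0 < xt^b * A h yt := mul_pos hPpos hA
  have hD : 0 < (1-xt)^b * B h yt := mul_pos hQpos hB
  have hden : 0 < xt^b * A h yt + (1-xt)^b * B h yt := by linarith
  rw [div_lt_iff₀ hden]
  have s1 : (1-xt)*(xt^b * A h yt) < (1-xt)*(xt^b * A h xt) := by
    apply mul_lt_mul_of_pos_left _ (by linarith)
    exact mul_lt_mul_of_pos_left hA' hPpos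
  have s2 : xt*((1-xt)^b * B h xt) < xt*((1-xt)^b * B h yt) := by
    apply mul_lt_mul_of_pos_left _ (by linarith)
    exact mul_lt_mul_of_pos_left hB' hQpos
  nlinarith

private lemma step_abs {h b xh xt yt : ℝ} (hh : 1 < h) (hb0 : 0 < b)
    (hxh1 : 1/2 < xh) (hxh2 : xh < 1)
    (heq : (1-xh)*(xh^b * A h xh) = xh*((1-xh)^b * B h xh))
    (hx1 : 1/2 < xt) (hy1 : 1/2 ≤ yt) (hy2 : yt ≤ xt) (hlt : xt < xh) :
    xt^b * A h yt / (xt^b * A h yt + (1-xt)^b * B h yt) < xh := by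
  have hA : 0 < A h yt := by simp only [A]; nlinarith
  have hB : 0 < B h yt := by simp only [B]; nlinarith
  have hA' : A h yt < A h xh := by simp only [A]; nlinarith
  have hB' : B h xh < B h yt := by simp only [B]; nlinarith
  have hPpos : 0 < xt^b := Real.rpow_pos_of_pos (by linarith) b
  have hQpos : 0 < (1-xt)^b := Real.rpow_pos_of_pos (by linarith) b
  have hxhb : 0 < xh^b := Real.rpow_pos_of_pos (by linarith) b
  have hPlt : xt^b < xh^b := Real.rpow_lt_rpow (by linarith) hlt hb0
  have hQgt : (1-xh)^b < (1-xt)^b := Real.rpow_lt_rpow (by linarith) (by linarith) hb0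
  have hN : 0 < xt^b * A h yt := mul_pos hPpos hA
  have hD : 0 < (1-xt)^b * B h yt := mul_pos hQpos hB
  have hden : 0 < xt^b * A h yt + (1-xt)^b * B h yt := by linarith
  rw [div_lt_iff₀ hden]
  have hAxh : 0 < A h xh := by simp only [A]; nlinarith
  have hBxh : 0 < B h xh := by simp only [B]; nlinarith
  have s1 : (1-xh)*(xt^b * A h yt) < (1-xh)*(xh^b * A h xh) := by
    apply mul_lt_mul_of_pos_left _ (by linarith)
    exact mul_lt_mul'' hPlt hA' hPpos.le hA.le
  have s2 : xh*((1-xh)^b * B h xh) < xh*((1-xt)^b * B h yt) := by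
    apply mul_lt_mul_of_pos_left _ (by linarith)
    exact mul_lt_mul'' hQgt hB' (Real.rpow_pos_of_pos (by linarith) b).le hBxh.le
  nlinarith

set_option maxHeartbeats 2000000 in
/-- Claim 2 in the proof of Theorem 3: in the moderate-bias regime, if
`x(k) ≥ x̂(1,h,b)` for some time `k`, then there exists `T > k` such that
`x(t) < x̂(1,h,b)` for all `t > T`. -/
theorem stmt_14 (h φ b : ℝ) (x y : ℕ → ℝ) (xhat1 : ℝ)
    (hh : 1 < h) (hφ : 0 < φ ∧ φ < 1)
    (hx0 : 1 / 2 < x 0 ∧ x 0 < 1) (hy0 : 1 / 2 ≤ y 0 ∧ y 0 ≤ x 0)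
    (hxupd : ∀ t : ℕ, x (t + 1) =
      (x t) ^ b * A h (y t) / ((x t) ^ b * A h (y t) + (1 - x t) ^ b * B h (y t)))
    (hyupd : ∀ t : ℕ, y (t + 1) = φ * x (t + 1) + (1 - φ) * (A h (y t) / (h + 1)))
    (hb : 2 / (φ * (h - 1) + 2) < b ∧ b < 1)
    (hxhat1 : xhat1 ∈ Set.Ioo (1 / 2 : ℝ) 1 ∧ g xhat1 b = h - 1)
    (k : ℕ) (hk : xhat1 ≤ x k) :
    ∃ T : ℕ, k < T ∧ ∀ t : ℕ, T < t → x t < xhat1 := by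
  obtain ⟨hφ0, hφ1⟩ := hφ
  obtain ⟨hb', hb1⟩ := hb
  obtain ⟨⟨hxh1, hxh2⟩, hg⟩ := hxhat1
  have hb0 : 0 < b := by
    have h2 : 0 < φ*(h-1)+2 := by nlinarith
    have h3 : 0 < 2/(φ*(h-1)+2) := by positivity
    linarith
  have hxh0 : (0:ℝ) < xhat1 := by linarith
  have h1xh : (0:ℝ) < 1 - xhat1 := by linarith
  have hne : xhat1 ≠ 1/2 := ne_of_gt hxh1
  simp only [g, if_neg hne] at hg
  have hdeh := de_pos2 (by linarith : (0:ℝ) < 1-b) (by linarith : (1:ℝ)-b < 1) hxh1 hxh2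
  rw [div_eq_iff hdeh.ne'] at hg
  -- hg : xhat1^(1-b) - (1-xhat1)^(1-b) = (h-1) * (...)
  have heq_c : (1-xhat1)^(1-b) * A h xhat1 = xhat1^(1-b) * B h xhat1 := by
    simp only [A, B]; linear_combination (-1 : ℝ) * hg
  have heq : (1-xhat1)*(xhat1^b * A h xhat1) = xhat1*((1-xhat1)^b * B h xhat1) := by
    have e1 : xhat1^(1-b) * xhat1^b = xhat1 := rpow_split hxh0 b
    have e2 : (1-xhat1)^(1-b) * (1-xhat1)^b = 1-xhat1 := rpow_split h1xh b
    calc (1-xhat1)*(xhat1^b * A h xhat1)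
        = xhat1^b*(1-xhat1)^b * ((1-xhat1)^(1-b) * A h xhat1) := by
          linear_combination (-(xhat1^b * A h xhat1)) * e2
      _ = xhat1^b*(1-xhat1)^b * (xhat1^(1-b) * B h xhat1) := by rw [heq_c]
      _ = xhat1*((1-xhat1)^b * B h xhat1) := by
          linear_combination ((1-xhat1)^b * B h xhat1) * e1
  have hkey : ∀ z, xhat1 ≤ z → z < 1 → (1-z)*(z^b * A h z) ≤ z*((1-z)^b * B h z) :=
    fun z hz1 hz2 => key_ineq hh hb0 hb1 hxh1 hxh2 hg hz1 hz2
  -- invariants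
  have hinv : ∀ t, (1/2 < x t ∧ x t < 1) ∧ (1/2 ≤ y t ∧ y t ≤ x t) := by
    intro t
    induction t with
    | zero => exact ⟨⟨hx0.1, hx0.2⟩, hy0⟩
    | succ t ih =>
      obtain ⟨⟨i1, i2⟩, ⟨i3, i4⟩⟩ := ih
      have hs := step_lem hh hb0 i1 i2 i3 i4
      rw [← hxupd t] at hs
      obtain ⟨s1, s2, s3⟩ := hs
      have hAhalf : 1/2 ≤ A h (y t) / (h+1) := by
        rw [le_div_iff₀ (by linarith)]
        simp only [A]; nlinarith
      refine ⟨⟨s1, s2⟩, ?_, ?_⟩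
      · rw [hyupd t]
        nlinarith [mul_nonneg hφ0.le (by linarith : (0:ℝ) ≤ x (t+1) - 1/2),
          mul_nonneg (by linarith : (0:ℝ) ≤ 1-φ)
            (by linarith : (0:ℝ) ≤ A h (y t)/(h+1) - 1/2)]
      · rw [hyupd t]
        nlinarith [mul_nonneg (by linarith : (0:ℝ) ≤ 1-φ)
          (by linarith : (0:ℝ) ≤ x (t+1) - A h (y t)/(h+1))]
  have hstrict : ∀ t, 1/2 < y (t+1) ∧ y (t+1) < x (t+1) := by
    intro t
    obtain ⟨⟨i1, i2⟩, ⟨i3, i4⟩⟩ := hinv t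
    have hs := step_lem hh hb0 i1 i2 i3 i4
    rw [← hxupd t] at hs
    obtain ⟨s1, s2, s3⟩ := hs
    have hAhalf : 1/2 ≤ A h (y t) / (h+1) := by
      rw [le_div_iff₀ (by linarith)]
      simp only [A]; nlinarith
    rw [hyupd t]
    constructor
    · nlinarith [mul_pos hφ0 (sub_pos.2 s1),
        mul_nonneg (by linarith : (0:ℝ) ≤ 1-φ)
          (by linarith : (0:ℝ) ≤ A h (y t)/(h+1) - 1/2)]
    · nlinarith [mul_pos (show (0:ℝ) < 1-φ by linarith) (sub_pos.2 s3)]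
  by_cases hcase : ∃ t, k < t ∧ x t < xhat1
  · obtain ⟨t0, ht0k, ht0⟩ := hcase
    refine ⟨t0, ht0k, fun t ht => ?_⟩
    have habs : ∀ m, x (t0 + m) < xhat1 := by
      intro m
      induction m with
      | zero => exact ht0
      | succ m ih =>
        have hi := hinv (t0 + m)
        have := step_abs hh hb0 hxh1 hxh2 heq hi.1.1 hi.2.1 hi.2.2 ih
        rw [← hxupd (t0+m)] at this
        exact this
    have := habs (t - t0)
    rwa [show t0 + (t - t0) = t by omega] at this
  · push_neg at hcase
    exfalso
    have hall : ∀ t, k ≤ t → xhat1 ≤ x t := by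
      intro t ht
      rcases eq_or_lt_of_le ht with rfl | h'
      · exact hk
      · exact hcase t h'
    set k1 := k + 1 with hk1def
    have hXgood : ∀ n : ℕ, xhat1 ≤ x (k1 + n) := fun n => hall _ (by omega)
    have hXlt1 : ∀ n : ℕ, x (k1 + n) < 1 := fun n => (hinv (k1+n)).1.2
    have hXhalf : ∀ n : ℕ, 1/2 < x (k1 + n) := fun n => (hinv (k1+n)).1.1
    have hYX : ∀ n : ℕ, 1/2 < y (k1 + n) ∧ y (k1 + n) < x (k1 + n) := by
      intro n
      have := hstrict (k + n)
      rwa [show (k+n)+1 = k1 + n by omega] at this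
    have hdec : ∀ n : ℕ, x (k1 + (n+1)) < x (k1 + n) := by
      intro n
      show x ((k1+n)+1) < x (k1+n)
      rw [hxupd (k1+n)]
      exact step_dec hh hb0 (hkey _ (hXgood n) (hXlt1 n)) (hXhalf n) (hXlt1 n)
        (hYX n).1.le (hYX n).2
    have hanti : StrictAnti (fun n : ℕ => x (k1 + n)) := strictAnti_nat_of_succ_lt hdec
    have hbdd : BddBelow (Set.range fun n : ℕ => x (k1 + n)) := by
      refine ⟨xhat1, ?_⟩
      rintro _ ⟨n, rfl⟩
      exact hXgood n
    set L := ⨅ n : ℕ, x (k1 + n) with hLdef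
    have hLx : Tendsto (fun n : ℕ => x (k1 + n)) atTop (𝓝 L) :=
      tendsto_atTop_ciInf hanti.antitone hbdd
    have hLlb : xhat1 ≤ L := le_ciInf hXgood
    have hLhalf : 1/2 < L := lt_of_lt_of_le hxh1 hLlb
    have hLub : L < 1 := lt_of_le_of_lt (ciInf_le hbdd 0) (hXlt1 0)
    have hL0 : (0:ℝ) < L := by linarith
    have hq0 : (0:ℝ) ≤ (1-φ)*(h-1)/(h+1) :=
      div_nonneg (mul_nonneg (by linarith) (by linarith)) (by linarith)
    have hq1 : (1-φ)*(h-1)/(h+1) < 1 := by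
      rw [div_lt_one (by linarith)]; nlinarith
    set q := (1-φ)*(h-1)/(h+1) with hqdef
    set ys := (φ*L + (1-φ)/(h+1))/(1-q) with hysdef
    have h1q : (0:ℝ) < 1 - q := by linarith
    have hys_eq : ys * (1-q) = φ*L + (1-φ)/(h+1) := div_mul_cancel₀ _ h1q.ne'
    have hysL : ys < L := by
      have e3 : (L*(1-q) - (φ*L + (1-φ)/(h+1)))*(h+1) = (1-φ)*(2*L-1) := by
        rw [hqdef]; field_simp; ring
      have pos1 : 0 < (1-φ)*(2*L-1) :=
        mul_pos (by linarith) (by linarith)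
      have hstep1 : 0 < L*(1-q) - (φ*L + (1-φ)/(h+1)) := by nlinarith [e3, pos1]
      have hstep2 : ys*(1-q) < L*(1-q) := by rw [hys_eq]; linarith
      exact (mul_lt_mul_iff_of_pos_right h1q).mp hstep2
    have hys_half : 1/2 < ys := by
      have e4 : ((φ*L + (1-φ)/(h+1)) - (1/2)*(1-q))*(h+1) = (h+1)*φ*(L - 1/2) := by
        rw [hqdef]; field_simp; ring
      have pos2 : 0 < (h+1)*φ*(L-1/2) :=
        mul_pos (mul_pos (by linarith) hφ0) (by linarith)
      have hstep3 : 0 < (φ*L + (1-φ)/(h+1)) - (1/2)*(1-q) := by nlinarith [e4, pos2]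
      have hstep4 : (1/2)*(1-q) < ys*(1-q) := by rw [hys_eq]; linarith
      exact (mul_lt_mul_iff_of_pos_right h1q).mp hstep4
    have hAdiv : ∀ z : ℝ, (1-φ)*(A h z/(h+1)) = q*z + (1-φ)/(h+1) := by
      intro z
      rw [hqdef]; simp only [A]; field_simp; ring
    have hrecY : ∀ n : ℕ, |(fun n : ℕ => y (k1+n) - ys) (n+1)| ≤
        φ * (fun n : ℕ => |x (k1+n) - L|) (n+1) + q * |(fun n : ℕ => y (k1+n) - ys) n| := by
      intro n
      simp only
      have e5 : y (k1+(n+1)) - ys = φ*(x (k1+(n+1)) - L) + q*(y (k1+n) - ys) := by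
        show y ((k1+n)+1) - ys = φ*(x ((k1+n)+1) - L) + q*(y (k1+n) - ys)
        rw [hyupd (k1+n), hAdiv]
        linear_combination (-1 : ℝ) * hys_eq
      rw [e5]
      calc |φ*(x (k1+(n+1)) - L) + q*(y (k1+n) - ys)|
          ≤ |φ*(x (k1+(n+1)) - L)| + |q*(y (k1+n) - ys)| := abs_add_le _ _
        _ = φ * |x (k1+(n+1)) - L| + q * |y (k1+n) - ys| := by
            rw [abs_mul, abs_mul, abs_of_nonneg hφ0.le, abs_of_nonneg hq0]
    have hvV : Tendsto (fun n : ℕ => |x (k1+n) - L|) atTop (𝓝 0) := by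
      have h0 := (hLx.sub (tendsto_const_nhds (x := L))).abs
      simpa using h0
    have hE : Tendsto (fun n : ℕ => y (k1+n) - ys) atTop (𝓝 0) :=
      tendsto_contraction hφ0.le hq0 hq1 hrecY (fun n => abs_nonneg _) hvV
    have hYs : Tendsto (fun n : ℕ => y (k1+n)) atTop (𝓝 ys) := by
      have h0 := hE.add_const ys
      simpa using h0
    have hLx1 : Tendsto (fun n : ℕ => x (k1 + (n+1))) atTop (𝓝 L) :=
      hLx.comp (tendsto_add_atTop_nat 1)
    have hA_t : Tendsto (fun n : ℕ => A h (y (k1+n))) atTop (𝓝 (A h ys)) := by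
      simp only [A]
      exact ((hYs.const_mul h).add_const 1).sub hYs
    have hB_t : Tendsto (fun n : ℕ => B h (y (k1+n))) atTop (𝓝 (B h ys)) := by
      simp only [B]
      exact hYs.add (((tendsto_const_nhds (x := (1:ℝ))).sub hYs).const_mul h)
    have hxb_t : Tendsto (fun n : ℕ => (x (k1+n))^b) atTop (𝓝 (L^b)) :=
      hLx.rpow_const (Or.inr hb0.le)
    have h1xb_t : Tendsto (fun n : ℕ => (1 - x (k1+n))^b) atTop (𝓝 ((1-L)^b)) :=
      ((tendsto_const_nhds (x := (1:ℝ))).sub hLx).rpow_const (Or.inr hb0.le)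
    have hAys : 0 < A h ys := by simp only [A]; nlinarith
    have hBys : 0 < B h ys := by simp only [B]; nlinarith
    have hden_pos : 0 < L^b * A h ys + (1-L)^b * B h ys :=
      add_pos (mul_pos (Real.rpow_pos_of_pos hL0 b) hAys)
        (mul_pos (Real.rpow_pos_of_pos (by linarith) b) hBys)
    have hRHS : Tendsto (fun n : ℕ => (x (k1+n))^b * A h (y (k1+n)) /
        ((x (k1+n))^b * A h (y (k1+n)) + (1 - x (k1+n))^b * B h (y (k1+n)))) atTop
        (𝓝 (L^b * A h ys / (L^b * A h ys + (1-L)^b * B h ys))) :=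
      (hxb_t.mul hA_t).div ((hxb_t.mul hA_t).add (h1xb_t.mul hB_t)) hden_pos.ne'
    have hfun_eq : (fun n : ℕ => x (k1 + (n+1))) = (fun n : ℕ => (x (k1+n))^b * A h (y (k1+n)) /
        ((x (k1+n))^b * A h (y (k1+n)) + (1 - x (k1+n))^b * B h (y (k1+n)))) :=
      funext fun n => hxupd (k1+n)
    have hLeq : L = L^b * A h ys / (L^b * A h ys + (1-L)^b * B h ys) :=
      tendsto_nhds_unique hLx1 (hfun_eq ▸ hRHS)
    have hlt : L^b * A h ys / (L^b * A h ys + (1-L)^b * B h ys) < L :=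
      step_dec hh hb0 (hkey L hLlb hLub) hLhalf hLub (by linarith) hysL
    linarith [hLeq ▸ hlt]
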